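/- Let 0 < λ_min < λ_max be real numbers, let σ(x) = 1/(1+exp(−x)), and let M, W be n×n real matrices (n ≥ 1). Define M̃_{i,j} = λ_max − (λ_max − λ_min)·σ(M_{i,j}) and W̃_{i,j} = (exp(W_{i,j}) / Σ_{k} exp(W_{i,k})) · M̃_{i,j}. Then W̃ has all entries strictly positive and its spectral radius ρ(W̃) satisfies λ_min < ρ(W̃) < λ_max. -/

import Mathlib

open scoped BigOperators

/-- The logistic sigmoid. -/
noncomputable def logisticSigmoid (x : ℝ) : ℝ := 1 / (1 + Real.exp (-x))

/-- The Perron–Frobenius parametrized matrix: the row-wise softmax of `W` multiplied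
elementwise with the entries of `M` clamped to `(λ_min, λ_max)` via the sigmoid. -/
noncomputable def pfMatrix {n : ℕ} (lmin lmax : ℝ) (M W : Matrix (Fin n) (Fin n) ℝ) :
    Matrix (Fin n) (Fin n) ℝ :=
  Matrix.of fun i j =>
    (Real.exp (W i j) / ∑ k, Real.exp (W i k)) *
      (lmax - (lmax - lmin) * logisticSigmoid (M i j))

/-- The spectral radius of a real square matrix: the maximum (supremum) of the moduli of
its complex eigenvalues. -/
noncomputable def matrixSpectralRadius {n : ℕ} (A : Matrix (Fin n) (Fin n) ℝ) : ℝ :=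
  sSup ((fun μ : ℂ => ‖μ‖) '' spectrum ℂ (A.map Complex.ofReal))

open scoped ENNReal NNReal

lemma aux_sigmoid_pos (x : ℝ) : 0 < logisticSigmoid x := by
  unfold logisticSigmoid; positivity

lemma aux_sigmoid_lt_one (x : ℝ) : logisticSigmoid x < 1 := by
  unfold logisticSigmoid
  rw [div_lt_one (by positivity)]
  linarith [Real.exp_pos (-x)]

lemma aux_mt_mem {lmin lmax : ℝ} (h : lmin < lmax) (x : ℝ) :
    lmin < lmax - (lmax - lmin) * logisticSigmoid x ∧
      lmax - (lmax - lmin) * logisticSigmoid x < lmax := by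
  have h1 := aux_sigmoid_pos x
  have h2 := aux_sigmoid_lt_one x
  constructor <;> nlinarith

lemma aux_pf_pos {n : ℕ} {lmin lmax : ℝ} (h0 : 0 < lmin) (h : lmin < lmax)
    (M W : Matrix (Fin n) (Fin n) ℝ) (i j : Fin n) :
    0 < pfMatrix lmin lmax M W i j := by
  have h1 := (aux_mt_mem h (M i j)).1
  have hs : (0:ℝ) < ∑ k, Real.exp (W i k) :=
    Finset.sum_pos (fun k _ => Real.exp_pos _) ⟨i, Finset.mem_univ i⟩
  have h2 : 0 < lmax - (lmax - lmin) * logisticSigmoid (M i j) := by linarith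
  unfold pfMatrix
  simp only [Matrix.of_apply]
  positivity

lemma aux_pf_rowsum {n : ℕ} (hn : 1 ≤ n) {lmin lmax : ℝ} (h : lmin < lmax)
    (M W : Matrix (Fin n) (Fin n) ℝ) (i : Fin n) :
    lmin < ∑ j, pfMatrix lmin lmax M W i j ∧ ∑ j, pfMatrix lmin lmax M W i j < lmax := by
  haveI : Nonempty (Fin n) := Fin.pos_iff_nonempty.mp hn
  have hs : (0:ℝ) < ∑ k, Real.exp (W i k) :=
    Finset.sum_pos (fun k _ => Real.exp_pos _) Finset.univ_nonempty
  have hp : ∀ j : Fin n, 0 < Real.exp (W i j) / ∑ k, Real.exp (W i k) :=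
    fun j => div_pos (Real.exp_pos _) hs
  have hsum1 : ∑ j, Real.exp (W i j) / ∑ k, Real.exp (W i k) = 1 := by
    rw [← Finset.sum_div, div_self hs.ne']
  constructor
  · calc lmin = ∑ j, (Real.exp (W i j) / ∑ k, Real.exp (W i k)) * lmin := by
          rw [← Finset.sum_mul, hsum1, one_mul]
    _ < ∑ j, pfMatrix lmin lmax M W i j := by
          apply Finset.sum_lt_sum_of_nonempty Finset.univ_nonempty
          intro j _
          exact (mul_lt_mul_iff_right₀ (hp j)).mpr (aux_mt_mem h (M i j)).1
  · calc ∑ j, pfMatrix lmin lmax M W i j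
        < ∑ j, (Real.exp (W i j) / ∑ k, Real.exp (W i k)) * lmax := by
          apply Finset.sum_lt_sum_of_nonempty Finset.univ_nonempty
          intro j _
          exact (mul_lt_mul_iff_right₀ (hp j)).mpr (aux_mt_mem h (M i j)).2
    _ = lmax := by rw [← Finset.sum_mul, hsum1, one_mul]

section Bridge

attribute [local instance] Matrix.linftyOpNormedAddCommGroup Matrix.linftyOpNormedRing
  Matrix.linftyOpNormedAlgebra

lemma aux_pow_entry_nonneg {n : ℕ} {A : Matrix (Fin n) (Fin n) ℝ} (hA : ∀ i j, 0 ≤ A i j) :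
    ∀ (k : ℕ) (i j : Fin n), 0 ≤ (A ^ k) i j := by
  intro k
  induction k with
  | zero => intro i j; rw [pow_zero]; by_cases hij : i = j <;> simp [Matrix.one_apply, hij]
  | succ k ih =>
    intro i j
    rw [pow_succ', Matrix.mul_apply]
    exact Finset.sum_nonneg fun l _ => mul_nonneg (hA i l) (ih l j)

lemma aux_pow_rowsum_ge {n : ℕ} {A : Matrix (Fin n) (Fin n) ℝ} {c : ℝ} (hc : 0 ≤ c)
    (hA : ∀ i j, 0 ≤ A i j) (hr : ∀ i, c ≤ ∑ j, A i j) :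
    ∀ (k : ℕ) (i : Fin n), c ^ k ≤ ∑ j, (A ^ k) i j := by
  intro k
  induction k with
  | zero =>
    intro i
    rw [pow_zero]
    rw [Finset.sum_eq_single i (fun b _ hb => by simp [Matrix.one_apply, (Ne.symm hb)])
      (fun h => absurd (Finset.mem_univ i) h)]
    simp [Matrix.one_apply]
  | succ k ih =>
    intro i
    have key : ∑ j, (A ^ (k+1)) i j = ∑ l, A i l * ∑ j, (A ^ k) l j := by
      rw [pow_succ']
      simp_rw [Matrix.mul_apply, Finset.mul_sum]
      rw [Finset.sum_comm]
    rw [key, pow_succ]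
    calc c ^ k * c ≤ c ^ k * ∑ l, A i l :=
          mul_le_mul_of_nonneg_left (hr i) (pow_nonneg hc k)
    _ ≤ ∑ l, A i l * ∑ j, (A ^ k) l j := by
          rw [Finset.mul_sum]
          apply Finset.sum_le_sum
          intro l _
          rw [mul_comm (c ^ k)]
          exact mul_le_mul_of_nonneg_left (ih l) (hA i l)

lemma aux_spectral_bounds {n : ℕ} (hn : 1 ≤ n) {A : Matrix (Fin n) (Fin n) ℝ} {c C : ℝ}
    (hc : 0 < c) (hA : ∀ i j, 0 ≤ A i j) (hlo : ∀ i, c ≤ ∑ j, A i j)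
    (hhi : ∀ i, ∑ j, A i j < C) :
    c ≤ matrixSpectralRadius A ∧ matrixSpectralRadius A < C := by
  haveI : Nonempty (Fin n) := Fin.pos_iff_nonempty.mp hn
  set B : Matrix (Fin n) (Fin n) ℂ := A.map Complex.ofReal with hB
  have hBpow : ∀ k : ℕ, B ^ k = (A ^ k).map Complex.ofReal := by
    intro k
    have := map_pow
      (Complex.ofRealHom.mapMatrix : Matrix (Fin n) (Fin n) ℝ →+* Matrix (Fin n) (Fin n) ℂ) A k
    exact this.symm
  have hC : 0 < C := lt_of_le_of_lt (hc.le.trans (hlo (Classical.arbitrary _))) (hhi _)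
  have hnorm : ∀ k : ℕ, c ^ k ≤ ‖B ^ k‖ := by
    intro k
    set i0 : Fin n := Classical.arbitrary (Fin n)
    rw [hBpow, Matrix.linfty_opNorm_def]
    have h1 : (∑ j, ‖((A ^ k).map Complex.ofReal) i0 j‖₊) ≤
        Finset.univ.sup fun i => ∑ j, ‖((A ^ k).map Complex.ofReal) i j‖₊ :=
      Finset.le_sup (f := fun i => ∑ j, ‖((A ^ k).map Complex.ofReal) i j‖₊)
        (Finset.mem_univ i0)
    calc c ^ k ≤ ∑ j, (A ^ k) i0 j := aux_pow_rowsum_ge hc.le hA hlo k i0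
    _ = ((∑ j, ‖((A ^ k).map Complex.ofReal) i0 j‖₊ : ℝ≥0) : ℝ) := by
        push_cast
        apply Finset.sum_congr rfl
        intro j _
        rw [Matrix.map_apply, Complex.norm_real,
          Real.norm_of_nonneg (aux_pow_entry_nonneg hA k i0 j)]
    _ ≤ _ := NNReal.coe_le_coe.mpr h1
  have hBnorm : ‖B‖ < C := by
    rw [Matrix.linfty_opNorm_def]
    have hlt : (Finset.univ.sup fun i => ∑ j, ‖B i j‖₊) < C.toNNReal := by
      apply Finset.sup_lt_iff (by simpa using Real.toNNReal_pos.mpr hC) |>.mpr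
      intro i _
      rw [← NNReal.coe_lt_coe, Real.coe_toNNReal _ hC.le]
      push_cast
      calc (∑ j, ‖B i j‖) = ∑ j, A i j := by
            apply Finset.sum_congr rfl
            intro j _
            rw [hB, Matrix.map_apply, Complex.norm_real, Real.norm_of_nonneg (hA i j)]
      _ < C := hhi i
    calc ((Finset.univ.sup fun i => ∑ j, ‖B i j‖₊ : ℝ≥0) : ℝ) < (C.toNNReal : ℝ) :=
          NNReal.coe_lt_coe.mpr hlt
    _ = C := Real.coe_toNNReal _ hC.le
  set S : Set ℝ := (fun μ : ℂ => ‖μ‖) '' spectrum ℂ B with hS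
  have hSne : S.Nonempty := (spectrum.nonempty B).image _
  have hSbd : ∀ x ∈ S, x ≤ ‖B‖ := by
    rintro x ⟨μ, hμ, rfl⟩
    show ‖μ‖ ≤ ‖B‖
    exact spectrum.norm_le_norm_of_mem hμ
  have hbdd : BddAbove S := ⟨‖B‖, hSbd⟩
  have hupper : sSup S < C := lt_of_le_of_lt (csSup_le hSne hSbd) hBnorm
  have hgel : ENNReal.ofReal c ≤ spectralRadius ℂ B := by
    apply ge_of_tendsto (spectrum.pow_nnnorm_pow_one_div_tendsto_nhds_spectralRadius B)
    filter_upwards [Filter.eventually_ge_atTop 1] with k hk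
    have hk' : (k : ℝ) ≠ 0 := Nat.cast_ne_zero.mpr (by omega)
    have h1 : ENNReal.ofReal (c ^ k) ≤ (‖B ^ k‖₊ : ℝ≥0∞) := by
      rw [← enorm_eq_nnnorm, ← ofReal_norm]
      exact ENNReal.ofReal_le_ofReal (hnorm k)
    calc ENNReal.ofReal c
        = ((ENNReal.ofReal c ^ k) : ℝ≥0∞) ^ (1 / (k : ℝ)) := by
          rw [← ENNReal.rpow_natCast, ← ENNReal.rpow_mul, mul_one_div_cancel hk',
            ENNReal.rpow_one]
    _ ≤ ((‖B ^ k‖₊ : ℝ≥0∞)) ^ (1 / (k : ℝ)) := by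
          apply ENNReal.rpow_le_rpow _ (by positivity)
          rw [← ENNReal.ofReal_pow hc.le]
          exact h1
  have hrad_le : spectralRadius ℂ B ≤ ENNReal.ofReal (sSup S) := by
    unfold spectralRadius
    apply iSup₂_le
    intro μ hμ
    rw [← enorm_eq_nnnorm, ← ofReal_norm]
    apply ENNReal.ofReal_le_ofReal
    exact le_csSup hbdd ⟨μ, hμ, rfl⟩
  have hfin : ENNReal.ofReal c ≤ ENNReal.ofReal (sSup S) := hgel.trans hrad_le
  have hSnn : 0 ≤ sSup S := by
    obtain ⟨x, μ, hμ, rfl⟩ := hSne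
    exact le_trans (norm_nonneg μ) (le_csSup hbdd ⟨μ, hμ, rfl⟩)
  have hlow : c ≤ sSup S := (ENNReal.ofReal_le_ofReal_iff hSnn).mp hfin
  exact ⟨hlow, hupper⟩

end Bridge

/-- For `0 < λ_min < λ_max`, the Perron–Frobenius parametrized matrix has strictly
positive entries and its spectral radius lies strictly in `(λ_min, λ_max)`. -/
theorem stmt_3 {n : ℕ} (hn : 1 ≤ n) (lmin lmax : ℝ) (h0 : 0 < lmin) (h : lmin < lmax)
    (M W : Matrix (Fin n) (Fin n) ℝ) :
    (∀ i j, 0 < pfMatrix lmin lmax M W i j) ∧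
      lmin < matrixSpectralRadius (pfMatrix lmin lmax M W) ∧
        matrixSpectralRadius (pfMatrix lmin lmax M W) < lmax := by
  haveI : Nonempty (Fin n) := Fin.pos_iff_nonempty.mp hn
  set A := pfMatrix lmin lmax M W with hA
  have hpos : ∀ i j, 0 < A i j := fun i j => aux_pf_pos h0 h M W i j
  set c : ℝ := Finset.univ.inf' Finset.univ_nonempty (fun i => ∑ j, A i j) with hc
  have hcgt : lmin < c := by
    rw [hc]
    apply (Finset.lt_inf'_iff _).mpr
    intro i _
    exact (aux_pf_rowsum hn h M W i).1
  have hbounds := aux_spectral_bounds hn (h0.trans hcgt)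
    (fun i j => (hpos i j).le)
    (fun i => Finset.inf'_le _ (Finset.mem_univ i))
    (fun i => (aux_pf_rowsum hn h M W i).2)
  exact ⟨hpos, lt_of_lt_of_le hcgt hbounds.1, hbounds.2⟩
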